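/- Let G be a finite simple graph without isolated vertices and with maximum degree Δ. Then every complex root z of the total domination polynomial D_t(G, z) satisfies |z| < 2^Δ. -/

import Mathlib

open Finset

/-- The total domination polynomial of a finite simple graph `G`, evaluated at `z`:
the sum of `z^{|S|}` over all total dominating sets `S` of `G`. -/
noncomputable def totalDominationPoly {V : Type*} [Fintype V] [DecidableEq V]
    (G : SimpleGraph V) [DecidableRel G.Adj] (z : ℂ) : ℂ :=
  ∑ S ∈ (univ : Finset (Finset V)).filter
      (fun S => ∀ u : V, ∃ v ∈ S, G.Adj u v), z ^ S.card


variable {V : Type} [Fintype V] [DecidableEq V]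

noncomputable def Zp (E : Finset (Finset V)) (w : ℂ) (A B : Finset V) : ℂ :=
  ∑ T ∈ A.powerset.filter (fun T => ∀ e ∈ E, ¬ e ⊆ B ∪ T), w ^ T.card

variable {E : Finset (Finset V)} {w : ℂ}

lemma Zp_zero {A B : Finset V} {e : Finset V} (he : e ∈ E) (hB : e ⊆ B) :
    Zp E w A B = 0 := by
  unfold Zp
  rw [Finset.filter_false_of_mem, Finset.sum_empty]
  intro T _ h
  exact h e he (hB.trans Finset.subset_union_left)

lemma Zp_empty {B : Finset V} (hK : ∀ e ∈ E, ¬ e ⊆ B) : Zp E w ∅ B = 1 := by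
  unfold Zp
  rw [Finset.powerset_empty]
  rw [Finset.filter_singleton]
  simp only [Finset.union_empty]
  rw [if_pos hK]
  simp

lemma Zp_rec {A B : Finset V} {v : V} (hv : v ∈ A) :
    Zp E w A B = Zp E w (A.erase v) B + w * Zp E w (A.erase v) (insert v B) := by
  classical
  have hve : v ∉ A.erase v := Finset.notMem_erase v A
  conv_lhs => rw [Zp, ← Finset.insert_erase hv]
  rw [Finset.powerset_insert, Finset.filter_union, Finset.sum_union]
  · congr 1
    rw [Finset.filter_image, Finset.sum_image]
    · rw [Zp, Finset.mul_sum]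
      apply Finset.sum_congr
      · apply Finset.filter_congr
        intro T hT
        simp only [Finset.mem_powerset] at hT
        constructor
        · intro h e heE hsub
          refine h e heE ?_
          rw [Finset.union_insert]
          rwa [Finset.insert_union] at hsub
        · intro h e heE hsub
          refine h e heE ?_
          rw [Finset.insert_union]
          rwa [Finset.union_insert] at hsub
      · intro T hT
        simp only [Finset.mem_filter, Finset.mem_powerset] at hT
        rw [Finset.card_insert_of_notMem (fun hvT => hve (hT.1 hvT))]
        ring
    · intro T hT T' hT' h
      simp only [Finset.mem_coe, Finset.mem_filter, Finset.mem_powerset] at hT hT'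
      replace hT := hT.1
      replace hT' := hT'.1
      have h1 : ∀ x ∈ T, x ∈ T' := by
        intro x hx
        have := h ▸ (Finset.mem_insert_of_mem hx : x ∈ insert v T)
        rcases Finset.mem_insert.1 this with rfl | hx'
        · exact absurd hx (fun hx => hve (hT hx))
        · exact hx'
      have h2 : ∀ x ∈ T', x ∈ T := by
        intro x hx
        have := h.symm ▸ (Finset.mem_insert_of_mem hx : x ∈ insert v T')
        rcases Finset.mem_insert.1 this with rfl | hx'
        · exact absurd hx (fun hx => hve (hT' hx))
        · exact hx'
      exact Finset.Subset.antisymm h1 h2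
  · apply Finset.disjoint_filter_filter
    rw [Finset.disjoint_left]
    intro T hT hT2
    simp only [Finset.mem_powerset] at hT
    simp only [Finset.mem_image] at hT2
    obtain ⟨T', _, rfl⟩ := hT2
    exact hve (hT (Finset.mem_insert_self v T'))

lemma Zp_force {A B S : Finset V} (hS : S ⊆ A) :
    ∑ T ∈ A.powerset.filter (fun T => (∀ e ∈ E, ¬ e ⊆ B ∪ T) ∧ S ⊆ T), w ^ T.card
      = w ^ S.card * Zp E w (A \ S) (B ∪ S) := by
  classical
  rw [Zp, Finset.mul_sum]
  refine Finset.sum_nbij' (fun T => T \ S) (fun T => T ∪ S) ?_ ?_ ?_ ?_ ?_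
  · intro T hT
    simp only [Finset.mem_filter, Finset.mem_powerset] at hT ⊢
    obtain ⟨hTA, hcond, hST⟩ := hT
    refine ⟨Finset.sdiff_subset_sdiff hTA (Finset.Subset.refl S), ?_⟩
    intro e he
    have : B ∪ S ∪ (T \ S) = B ∪ T := by
      rw [Finset.union_assoc, Finset.union_sdiff_of_subset hST]
    rw [this]
    exact hcond e he
  · intro T hT
    simp only [Finset.mem_filter, Finset.mem_powerset] at hT ⊢
    obtain ⟨hTA, hcond⟩ := hT
    have hTS : Disjoint T S := Finset.disjoint_of_subset_left hTA (Finset.sdiff_disjoint)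
    refine ⟨Finset.union_subset (hTA.trans (Finset.sdiff_subset)) hS, ?_, Finset.subset_union_right⟩
    intro e he
    have : B ∪ (T ∪ S) = B ∪ S ∪ T := by
      rw [Finset.union_comm T S, ← Finset.union_assoc]
    rw [this]
    exact hcond e he
  · intro T hT
    simp only [Finset.mem_filter, Finset.mem_powerset] at hT
    exact Finset.sdiff_union_of_subset hT.2.2
  · intro T hT
    simp only [Finset.mem_filter, Finset.mem_powerset] at hT
    have hTS : Disjoint T S := Finset.disjoint_of_subset_left hT.1 (Finset.sdiff_disjoint)
    exact Finset.union_sdiff_cancel_right hTS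
  · intro T hT
    simp only [Finset.mem_filter, Finset.mem_powerset] at hT
    have h := Finset.card_sdiff_add_card_eq_card hT.2.2
    show w ^ T.card = w ^ S.card * w ^ (T \ S).card
    rw [← pow_add]
    congr 1
    omega

lemma Zp_expand {A B : Finset V} {v : V} (hv : v ∈ A) :
    Zp E w (A.erase v) (insert v B) =
      ∑ I ∈ ((E.filter (fun e => v ∈ e ∧ e ⊆ A ∪ B)).image (fun e => e \ insert v B)).powerset,
        (-1 : ℂ) ^ I.card * (w ^ (I.biUnion id).card *
          Zp E w ((A.erase v) \ I.biUnion id) (B ∪ I.biUnion id)) := by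
  classical
  set A' := A.erase v with hA'
  set F := (E.filter (fun e => v ∈ e ∧ e ⊆ A ∪ B)).image (fun e => e \ insert v B) with hF
  have hFsub : ∀ f ∈ F, f ⊆ A' := by
    intro f hf
    rw [hF] at hf
    simp only [Finset.mem_image, Finset.mem_filter] at hf
    obtain ⟨e, ⟨heE, hve, heAB⟩, rfl⟩ := hf
    intro x hx
    simp only [Finset.mem_sdiff, Finset.mem_insert] at hx
    push_neg at hx
    obtain ⟨hxe, hxv, hxB⟩ := hx
    rcases Finset.mem_union.1 (heAB hxe) with h | h
    · exact Finset.mem_erase.2 ⟨hxv, h⟩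
    · exact absurd h hxB
  -- Step A : logical splitting of the condition
  have key : ∀ T ∈ A'.powerset,
      ((∀ e ∈ E, ¬ e ⊆ insert v B ∪ T) ↔
        ((∀ e ∈ E, ¬ e ⊆ B ∪ T) ∧ ∀ f ∈ F, ¬ f ⊆ T)) := by
    intro T hT
    rw [Finset.mem_powerset] at hT
    constructor
    · intro hQ
      constructor
      · intro e he hsub
        exact hQ e he (hsub.trans (Finset.union_subset_union_left (Finset.subset_insert v B)))
      · intro f hf hfT
        rw [hF] at hf
        simp only [Finset.mem_image, Finset.mem_filter] at hf
        obtain ⟨e, ⟨heE, hve, heAB⟩, rfl⟩ := hf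
        refine hQ e heE ?_
        intro x hx
        by_cases hx2 : x ∈ insert v B
        · exact Finset.mem_union_left _ hx2
        · exact Finset.mem_union_right _ (hfT (Finset.mem_sdiff.2 ⟨hx, hx2⟩))
    · rintro ⟨hbase, hf⟩ e he hsub
      by_cases hve : v ∈ e
      · have heAB : e ⊆ A ∪ B := by
          intro x hx
          rcases Finset.mem_union.1 (hsub hx) with h | h
          · rcases Finset.mem_insert.1 h with rfl | h2
            · exact Finset.mem_union_left _ hv
            · exact Finset.mem_union_right _ h2
          · exact Finset.mem_union_left _ (Finset.erase_subset v A (hT h))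
        have hfF : e \ insert v B ∈ F := by
          rw [hF]
          exact Finset.mem_image_of_mem _ (Finset.mem_filter.2 ⟨he, hve, heAB⟩)
        refine hf _ hfF ?_
        intro x hx
        rw [Finset.mem_sdiff] at hx
        rcases Finset.mem_union.1 (hsub hx.1) with h | h
        · exact absurd h hx.2
        · exact h
      · refine hbase e he ?_
        intro x hx
        rcases Finset.mem_union.1 (hsub hx) with h | h
        · rcases Finset.mem_insert.1 h with rfl | h2
          · exact absurd hx hve
          · exact Finset.mem_union_left _ h2
        · exact Finset.mem_union_right _ h
  -- rewrite LHS as a sum over base-filtered T with indicator product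
  have step1 : Zp E w A' (insert v B) =
      ∑ T ∈ A'.powerset.filter (fun T => ∀ e ∈ E, ¬ e ⊆ B ∪ T),
        w ^ T.card * ∏ f ∈ F, (if f ⊆ T then (0:ℂ) else 1) := by
    have : ∀ T ∈ A'.powerset.filter (fun T => ∀ e ∈ E, ¬ e ⊆ B ∪ T),
        w ^ T.card * ∏ f ∈ F, (if f ⊆ T then (0:ℂ) else 1)
          = if (∀ f ∈ F, ¬ f ⊆ T) then w ^ T.card else 0 := by
      intro T _
      have hpr : (∏ f ∈ F, (if f ⊆ T then (0:ℂ) else 1))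
          = if (∀ f ∈ F, ¬ f ⊆ T) then 1 else 0 := by
        by_cases h : ∀ f ∈ F, ¬ f ⊆ T
        · rw [if_pos h]
          apply Finset.prod_eq_one
          intro f hf
          rw [if_neg (h f hf)]
        · rw [if_neg h]
          push_neg at h
          obtain ⟨f, hf, hsub⟩ := h
          apply Finset.prod_eq_zero hf
          rw [if_pos hsub]
      rw [hpr]
      by_cases h : ∀ f ∈ F, ¬ f ⊆ T <;> simp [h]
    rw [Finset.sum_congr rfl this, Finset.sum_ite, Finset.sum_const_zero, add_zero,
      Finset.filter_filter, Zp]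
    apply Finset.sum_congr _ (fun _ _ => rfl)
    apply Finset.filter_congr
    intro T hT
    rw [key T hT]
  rw [step1]
  -- Step B : expand the product
  have step2 : ∀ T : Finset V, (∏ f ∈ F, (if f ⊆ T then (0:ℂ) else 1))
      = ∑ I ∈ F.powerset, (-1:ℂ) ^ I.card * (if I.biUnion id ⊆ T then 1 else 0) := by
    intro T
    have hrw : ∀ f ∈ F, (if f ⊆ T then (0:ℂ) else 1)
        = (if f ⊆ T then (1:ℂ) else 0) * (-1) + 1 := by
      intro f _
      by_cases h : f ⊆ T <;> simp [h]
    rw [Finset.prod_congr rfl hrw, Finset.prod_add]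
    apply Finset.sum_congr rfl
    intro I hI
    rw [Finset.mem_powerset] at hI
    rw [Finset.prod_const_one, mul_one, Finset.prod_mul_distrib, Finset.prod_const]
    have hpr2 : (∏ f ∈ I, (if f ⊆ T then (1:ℂ) else 0))
        = if I.biUnion id ⊆ T then 1 else 0 := by
      by_cases h : I.biUnion id ⊆ T
      · rw [if_pos h]
        apply Finset.prod_eq_one
        intro f hf
        rw [if_pos (show f ⊆ T from (Finset.subset_biUnion_of_mem id hf).trans h)]
      · rw [if_neg h]
        have : ∃ f ∈ I, ¬ f ⊆ T := by
          by_contra hc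
          push_neg at hc
          exact h (Finset.biUnion_subset.2 hc)
        obtain ⟨f, hf, hsub⟩ := this
        apply Finset.prod_eq_zero hf
        rw [if_neg hsub]
    rw [hpr2, mul_comm]
  have swap : ∑ T ∈ A'.powerset.filter (fun T => ∀ e ∈ E, ¬ e ⊆ B ∪ T),
      w ^ T.card * ∏ f ∈ F, (if f ⊆ T then (0:ℂ) else 1)
      = ∑ I ∈ F.powerset, ∑ T ∈ A'.powerset.filter (fun T => ∀ e ∈ E, ¬ e ⊆ B ∪ T),
          w ^ T.card * ((-1:ℂ) ^ I.card * (if I.biUnion id ⊆ T then 1 else 0)) := by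
    rw [← Finset.sum_comm]
    apply Finset.sum_congr rfl
    intro T _
    rw [step2 T, Finset.mul_sum]
  rw [swap]
  apply Finset.sum_congr rfl
  intro I hI
  rw [Finset.mem_powerset] at hI
  have hIU : I.biUnion id ⊆ A' := by
    apply Finset.biUnion_subset.2
    intro f hf
    exact hFsub f (hI hf)
  calc ∑ T ∈ A'.powerset.filter (fun T => ∀ e ∈ E, ¬ e ⊆ B ∪ T),
        w ^ T.card * ((-1:ℂ) ^ I.card * (if I.biUnion id ⊆ T then 1 else 0))
      = (-1:ℂ) ^ I.card * ∑ T ∈ A'.powerset.filter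
          (fun T => (∀ e ∈ E, ¬ e ⊆ B ∪ T) ∧ I.biUnion id ⊆ T), w ^ T.card := by
        have hstep : ∀ T ∈ A'.powerset.filter (fun T => ∀ e ∈ E, ¬ e ⊆ B ∪ T),
            w ^ T.card * ((-1:ℂ) ^ I.card * (if I.biUnion id ⊆ T then 1 else 0))
            = (-1:ℂ) ^ I.card * (if I.biUnion id ⊆ T then w ^ T.card else 0) := by
          intro T _
          by_cases h : I.biUnion id ⊆ T
          · rw [if_pos h, if_pos h]
            ring
          · rw [if_neg h, if_neg h]
            ring
        rw [Finset.sum_congr rfl hstep, ← Finset.mul_sum, ← Finset.sum_filter,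
          Finset.filter_filter]
      _ = (-1:ℂ) ^ I.card * (w ^ (I.biUnion id).card *
            Zp E w (A' \ I.biUnion id) (B ∪ I.biUnion id)) := by
        rw [Zp_force hIU]

lemma Zp_chain {C r : ℝ} {Δ N : ℕ} (hC : 1 ≤ C) (hw : ‖w‖ ≤ r)
    (H3 : ∀ A B : Finset V, A.card ≤ N → Disjoint A B → (∀ e ∈ E, ¬ e ⊆ B) →
      ∀ v ∈ A, (E.filter (fun e => v ∈ e ∧ e ⊆ A ∪ B)).card ≤ Δ - 1 →
        ‖Zp E w (A.erase v) (insert v B)‖ ≤ C * ‖Zp E w A B‖) :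
    ∀ (S A B : Finset V), A.card ≤ N → Disjoint A B → S ⊆ A →
      (∀ x ∈ S, (E.filter (fun e => x ∈ e ∧ e ⊆ A ∪ B)).card ≤ Δ - 1) →
      ‖Zp E w (A \ S) (B ∪ S)‖ ≤ C ^ S.card * ‖Zp E w A B‖ := by
  classical
  intro S
  induction S using Finset.induction_on with
  | empty =>
    intro A B _ _ _ _
    simp only [Finset.sdiff_empty, Finset.union_empty, Finset.card_empty, pow_zero, one_mul,
      le_refl]
  | insert x S' hx ih =>
    intro A B hcard hAB hSA hdeg
    have hxA : x ∈ A := hSA (Finset.mem_insert_self x S')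
    have hCpos : (0:ℝ) < C := lt_of_lt_of_le one_pos hC
    by_cases hKB : ∀ e ∈ E, ¬ e ⊆ B
    · have hxe : x ∉ A.erase x := Finset.notMem_erase x A
      have hAB' : Disjoint (A.erase x) (insert x B) := by
        rw [Finset.disjoint_insert_right]
        exact ⟨hxe, Finset.disjoint_of_subset_left (Finset.erase_subset x A) hAB⟩
      have hS'A : S' ⊆ A.erase x := by
        intro y hy
        exact Finset.mem_erase.2 ⟨fun h => hx (h ▸ hy), hSA (Finset.mem_insert_of_mem hy)⟩
      have hunion : (A.erase x) ∪ (insert x B) = A ∪ B := by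
        ext y
        simp only [Finset.mem_union, Finset.mem_erase, Finset.mem_insert]
        constructor
        · rintro (⟨_, h⟩ | (rfl | h))
          · exact Or.inl h
          · exact Or.inl hxA
          · exact Or.inr h
        · rintro (h | h)
          · by_cases hyx : y = x
            · exact Or.inr (Or.inl hyx)
            · exact Or.inl ⟨hyx, h⟩
          · exact Or.inr (Or.inr h)
      have h1 : ‖Zp E w (A.erase x) (insert x B)‖ ≤ C * ‖Zp E w A B‖ :=
        H3 A B hcard hAB hKB x hxA (hdeg x (Finset.mem_insert_self x S'))
      have hrec := ih (A.erase x) (insert x B)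
        (le_trans (Finset.card_le_card (Finset.erase_subset x A)) hcard) hAB' hS'A
        (fun y hy => by rw [hunion]; exact hdeg y (Finset.mem_insert_of_mem hy))
      have heq1 : A \ insert x S' = (A.erase x) \ S' := by
        ext y
        simp only [Finset.mem_sdiff, Finset.mem_insert, Finset.mem_erase]
        tauto
      have heq2 : B ∪ insert x S' = (insert x B) ∪ S' := by
        rw [Finset.union_insert, Finset.insert_union]
      rw [heq1, heq2, Finset.card_insert_of_notMem hx, pow_succ]
      calc ‖Zp E w ((A.erase x) \ S') ((insert x B) ∪ S')‖
          ≤ C ^ S'.card * ‖Zp E w (A.erase x) (insert x B)‖ := hrec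
        _ ≤ C ^ S'.card * (C * ‖Zp E w A B‖) := by
            apply mul_le_mul_of_nonneg_left h1 (le_of_lt (pow_pos hCpos _))
        _ = C ^ S'.card * C * ‖Zp E w A B‖ := by ring
    · push_neg at hKB
      obtain ⟨e, he, hsub⟩ := hKB
      rw [Zp_zero he (hsub.trans Finset.subset_union_left)]
      rw [norm_zero]
      positivity

lemma union_card_ge_two {f g : Finset V} (hf : f.Nonempty) (hg : g.Nonempty) (hfg : f ≠ g) :
    2 ≤ (f ∪ g).card := by
  by_contra h
  push_neg at h
  interval_cases hcard : (f ∪ g).card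
  · rw [Finset.card_eq_zero, Finset.union_eq_empty] at hcard
    exact hf.ne_empty hcard.1
  · rw [Finset.card_eq_one] at hcard
    obtain ⟨a, ha⟩ := hcard
    have h1 : f = {a} := by
      rcases Finset.subset_singleton_iff.1 (ha ▸ Finset.subset_union_left) with h | h
      · exact absurd h hf.ne_empty
      · exact h
    have h2 : g = {a} := by
      rcases Finset.subset_singleton_iff.1 (ha ▸ Finset.subset_union_right) with h | h
      · exact absurd h hg.ne_empty
      · exact h
    exact hfg (h1.trans h2.symm)

lemma sum_powerset_bound {F : Finset (Finset V)} (hne : ∀ f ∈ F, f.Nonempty)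
    {x : ℝ} (hx0 : 0 ≤ x) (hx1 : x ≤ 1) :
    ∑ I ∈ F.powerset, x ^ (I.biUnion id).card
      ≤ 1 + F.card * x + ((2 ^ F.card - 1 - F.card : ℕ) : ℝ) * x ^ 2 := by
  classical
  set m := F.card with hm
  set P := F.powerset with hP
  have hsplit0 := Finset.sum_filter_add_sum_filter_not P (fun I => I.card = 0)
    (fun I => x ^ (I.biUnion id).card)
  have hsplit1 := Finset.sum_filter_add_sum_filter_not (P.filter (fun I => ¬ I.card = 0))
    (fun I => I.card = 1) (fun I => x ^ (I.biUnion id).card)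
  -- the empty part
  have hempty : P.filter (fun I => I.card = 0) = {∅} := by
    ext I
    simp only [Finset.mem_filter, Finset.mem_singleton, Finset.card_eq_zero, hP,
      Finset.mem_powerset]
    constructor
    · rintro ⟨_, rfl⟩; rfl
    · rintro rfl; exact ⟨Finset.empty_subset F, rfl⟩
  have h0 : ∑ I ∈ P.filter (fun I => I.card = 0), x ^ (I.biUnion id).card = 1 := by
    rw [hempty, Finset.sum_singleton, Finset.biUnion_empty, Finset.card_empty, pow_zero]
  -- identify the singleton part
  have hsing : (P.filter (fun I => ¬ I.card = 0)).filter (fun I => I.card = 1)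
      = F.image (fun f => ({f} : Finset (Finset V))) := by
    ext I
    simp only [Finset.mem_filter, Finset.mem_image, hP, Finset.mem_powerset]
    constructor
    · rintro ⟨⟨hIF, _⟩, hc1⟩
      obtain ⟨f, rfl⟩ := Finset.card_eq_one.1 hc1
      exact ⟨f, hIF (Finset.mem_singleton_self f), rfl⟩
    · rintro ⟨f, hf, rfl⟩
      refine ⟨⟨Finset.singleton_subset_iff.2 hf, ?_⟩, Finset.card_singleton f⟩
      simp
  have hsingcard : ((P.filter (fun I => ¬ I.card = 0)).filter (fun I => I.card = 1)).card = m := by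
    rw [hsing, Finset.card_image_of_injective _ Finset.singleton_injective]
  have h1 : ∑ I ∈ (P.filter (fun I => ¬ I.card = 0)).filter (fun I => I.card = 1),
      x ^ (I.biUnion id).card ≤ m * x := by
    have : ∀ I ∈ (P.filter (fun I => ¬ I.card = 0)).filter (fun I => I.card = 1),
        x ^ (I.biUnion id).card ≤ x := by
      intro I hI
      rw [hsing] at hI
      simp only [Finset.mem_image] at hI
      obtain ⟨f, hf, rfl⟩ := hI
      have : ({f} : Finset (Finset V)).biUnion id = f := by simp
      rw [this]
      calc x ^ f.card ≤ x ^ 1 := by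
            apply pow_le_pow_of_le_one hx0 hx1
            exact Finset.card_pos.2 (hne f hf)
        _ = x := pow_one x
    calc ∑ I ∈ (P.filter (fun I => ¬ I.card = 0)).filter (fun I => I.card = 1),
          x ^ (I.biUnion id).card
        ≤ ((P.filter (fun I => ¬ I.card = 0)).filter (fun I => I.card = 1)).card • x :=
          Finset.sum_le_card_nsmul _ _ x this
      _ = m * x := by rw [hsingcard, nsmul_eq_mul]
  -- the big part
  have hbigcard : ((P.filter (fun I => ¬ I.card = 0)).filter (fun I => ¬ I.card = 1)).card
      = 2 ^ m - 1 - m := by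
    have e1 := Finset.card_filter_add_card_filter_not (s := P) (p := fun I => I.card = 0)
    have e2 := Finset.card_filter_add_card_filter_not
      (s := P.filter (fun I => ¬ I.card = 0)) (p := fun I => I.card = 1)
    have e3 : P.card = 2 ^ m := by rw [hP, Finset.card_powerset, hm]
    have e4 : (P.filter (fun I => I.card = 0)).card = 1 := by rw [hempty, Finset.card_singleton]
    omega
  have h2 : ∑ I ∈ (P.filter (fun I => ¬ I.card = 0)).filter (fun I => ¬ I.card = 1),
      x ^ (I.biUnion id).card ≤ ((2 ^ m - 1 - m : ℕ) : ℝ) * x ^ 2 := by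
    have hterm : ∀ I ∈ (P.filter (fun I => ¬ I.card = 0)).filter (fun I => ¬ I.card = 1),
        x ^ (I.biUnion id).card ≤ x ^ 2 := by
      intro I hI
      simp only [Finset.mem_filter, hP, Finset.mem_powerset] at hI
      obtain ⟨⟨hIF, hc0⟩, hc1⟩ := hI
      have hc2 : 2 ≤ I.card := by omega
      obtain ⟨f, hfI, g, hgI, hfg⟩ := Finset.one_lt_card.1 hc2
      have hsub : f ∪ g ⊆ I.biUnion id := by
        apply Finset.union_subset
        · exact Finset.subset_biUnion_of_mem id hfI
        · exact Finset.subset_biUnion_of_mem id hgI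
      have : 2 ≤ (I.biUnion id).card :=
        le_trans (union_card_ge_two (hne f (hIF hfI)) (hne g (hIF hgI)) hfg)
          (Finset.card_le_card hsub)
      exact pow_le_pow_of_le_one hx0 hx1 this
    calc ∑ I ∈ (P.filter (fun I => ¬ I.card = 0)).filter (fun I => ¬ I.card = 1),
          x ^ (I.biUnion id).card
        ≤ ((P.filter (fun I => ¬ I.card = 0)).filter (fun I => ¬ I.card = 1)).card • (x ^ 2) :=
          Finset.sum_le_card_nsmul _ _ _ hterm
      _ = ((2 ^ m - 1 - m : ℕ) : ℝ) * x ^ 2 := by rw [hbigcard, nsmul_eq_mul]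
  calc ∑ I ∈ P, x ^ (I.biUnion id).card
      = 1 + (∑ I ∈ (P.filter (fun I => ¬ I.card = 0)).filter (fun I => I.card = 1),
          x ^ (I.biUnion id).card
        + ∑ I ∈ (P.filter (fun I => ¬ I.card = 0)).filter (fun I => ¬ I.card = 1),
          x ^ (I.biUnion id).card) := by
        rw [← hsplit0, ← hsplit1, h0]
    _ ≤ 1 + (m * x + ((2 ^ m - 1 - m : ℕ) : ℝ) * x ^ 2) := by
        apply add_le_add (le_refl _)
        exact add_le_add h1 h2
    _ = 1 + m * x + ((2 ^ m - 1 - m : ℕ) : ℝ) * x ^ 2 := by ring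

/-- The bound polynomial `P_m(x) = 1 + m x + (2^m - 1 - m) x²`. -/
noncomputable def Pf (m : ℕ) (x : ℝ) : ℝ := 1 + m * x + ((2 ^ m - 1 - m : ℕ) : ℝ) * x ^ 2

lemma Pf_nonneg {m : ℕ} {x : ℝ} (hx : 0 ≤ x) : 0 ≤ Pf m x := by
  unfold Pf
  positivity

lemma two_pow_sub_mono : ∀ {m m' : ℕ}, m ≤ m' → (2 ^ m - 1 - m : ℕ) ≤ (2 ^ m' - 1 - m' : ℕ) := by
  intro m m' h
  induction m', h using Nat.le_induction with
  | base => exact le_refl _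
  | succ k hk ihk =>
    have hk1 : k < 2 ^ k := Nat.lt_two_pow_self
    have : (2:ℕ) ^ (k+1) = 2 * 2 ^ k := by ring
    omega

lemma Pf_mono {m m' : ℕ} {x : ℝ} (hx : 0 ≤ x) (h : m ≤ m') : Pf m x ≤ Pf m' x := by
  unfold Pf
  have h1 : (m : ℝ) * x ≤ (m' : ℝ) * x := by
    apply mul_le_mul_of_nonneg_right _ hx
    exact_mod_cast h
  have h2 : (((2 ^ m - 1 - m : ℕ) : ℝ)) * x ^ 2 ≤ (((2 ^ m' - 1 - m' : ℕ) : ℝ)) * x ^ 2 := by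
    apply mul_le_mul_of_nonneg_right _ (sq_nonneg x)
    exact_mod_cast two_pow_sub_mono h
  linarith

lemma abs_add_lower (a b : ℂ) : ‖a‖ - ‖b‖ ≤ ‖a + b‖ := by
  have h := norm_add_le (a + b) (-b)
  rw [add_neg_cancel_right, norm_neg] at h
  linarith

lemma nat_fact1 : ∀ Δ : ℕ, 3 ≤ Δ → 8 * Δ ≤ 3 * 2 ^ Δ := by
  intro Δ h
  induction Δ, h using Nat.le_induction with
  | base => norm_num
  | succ k hk ihk =>
    have : (2:ℕ) ^ (k+1) = 2 * 2 ^ k := by ring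
    omega

lemma nat_fact2 : ∀ Δ : ℕ, 4 ≤ Δ → 16 * (Δ - 1) ≤ 3 * 2 ^ Δ := by
  intro Δ h
  induction Δ, h using Nat.le_induction with
  | base => norm_num
  | succ k hk ihk =>
    have : (2:ℕ) ^ (k+1) = 2 * 2 ^ k := by ring
    omega

lemma numerics {Δ : ℕ} (hΔ : 3 ≤ Δ) :
    0 < ((2:ℝ) ^ Δ)⁻¹ ∧ ((2:ℝ) ^ Δ)⁻¹ ≤ 1/8 ∧
    (0 ≤ (11/5) * ((2:ℝ) ^ Δ)⁻¹ ∧ (11/5) * ((2:ℝ) ^ Δ)⁻¹ ≤ 1) ∧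
    Pf (Δ - 1) ((11/5) * ((2:ℝ) ^ Δ)⁻¹) * (63/50) ≤ 11/5 ∧
    (63/50) * (1 - ((2:ℝ) ^ Δ)⁻¹ * Pf (Δ - 1) ((11/5) * ((2:ℝ) ^ Δ)⁻¹)) ≥ 1 ∧
    ((2:ℝ) ^ Δ)⁻¹ * Pf Δ ((11/5) * ((2:ℝ) ^ Δ)⁻¹) ≤ 243/800 := by
  have hp : (0:ℝ) < 2 ^ Δ := by positivity
  set r : ℝ := ((2:ℝ) ^ Δ)⁻¹ with hr
  have hrpos : 0 < r := by positivity
  have hrid : (2:ℝ) ^ Δ * r = 1 := mul_inv_cancel₀ (ne_of_gt hp)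
  have hr8 : r ≤ 1/8 := by
    rw [hr]
    rw [inv_le_comm₀ hp (by norm_num)]
    calc ((1:ℝ)/8)⁻¹ = 2 ^ 3 := by norm_num
      _ ≤ 2 ^ Δ := by
        apply pow_le_pow_right₀ (by norm_num) hΔ
  set x : ℝ := (11/5) * r with hx
  have hx0 : 0 ≤ x := by positivity
  have hx1 : x ≤ 1 := by
    rw [hx]
    nlinarith
  refine ⟨hrpos, hr8, ⟨hx0, hx1⟩, ?_⟩
  -- casts for the quadratic coefficients
  have hcast : ∀ k : ℕ, (((2 ^ k - 1 - k : ℕ) : ℝ)) ≤ 2 ^ k := by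
    intro k
    calc (((2 ^ k - 1 - k : ℕ) : ℝ)) ≤ (((2 ^ k : ℕ) : ℝ)) := by
          exact_mod_cast Nat.sub_le _ _ |>.trans (Nat.sub_le _ _)
      _ = 2 ^ k := by push_cast; ring
  have hPfDelta : Pf Δ x ≤ 243/100 := by
    have h1 : (Δ : ℝ) * x ≤ 33/40 := by
      have := nat_fact1 Δ hΔ
      have hc : (8:ℝ) * Δ ≤ 3 * 2 ^ Δ := by exact_mod_cast this
      have hDr : (Δ:ℝ) * r ≤ 3/8 := by
        rw [hr, le_div_iff₀ (by norm_num : (0:ℝ) < 8)] at *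
        calc (Δ:ℝ) * ((2:ℝ)^Δ)⁻¹ * 8 = (8 * Δ) * ((2:ℝ)^Δ)⁻¹ := by ring
          _ ≤ (3 * 2 ^ Δ) * ((2:ℝ)^Δ)⁻¹ := by
              apply mul_le_mul_of_nonneg_right hc (by positivity)
          _ = 3 := by field_simp
      calc (Δ : ℝ) * x = (11/5) * ((Δ:ℝ) * r) := by rw [hx]; ring
        _ ≤ (11/5) * (3/8) := by linarith
        _ = 33/40 := by norm_num
    have h2 : (((2 ^ Δ - 1 - Δ : ℕ) : ℝ)) * x ^ 2 ≤ 121/200 := by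
      calc (((2 ^ Δ - 1 - Δ : ℕ) : ℝ)) * x ^ 2 ≤ 2 ^ Δ * x ^ 2 := by
            apply mul_le_mul_of_nonneg_right (hcast Δ) (sq_nonneg x)
        _ = (121/25) * ((2:ℝ) ^ Δ * r) * r := by rw [hx]; ring
        _ = (121/25) * r := by rw [hrid]; ring
        _ ≤ 121/200 := by nlinarith
    unfold Pf
    linarith
  have hlast : r * Pf Δ x ≤ 243 / 800 := by
    calc r * Pf Δ x ≤ (1/8) * (243/100) := by
          apply mul_le_mul hr8 hPfDelta (Pf_nonneg hx0) (by norm_num)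
      _ ≤ 243/800 := by norm_num
  rcases Nat.lt_or_ge Δ 4 with h4 | h4
  · -- Δ = 3
    have hΔ3 : Δ = 3 := by omega
    subst hΔ3
    have hrval : r = 1/8 := by rw [hr]; norm_num
    have hxval : x = 11/40 := by rw [hx, hrval]; norm_num
    have hPf2 : Pf 2 x = 1 + 2 * (11/40) + (11/40)^2 := by
      unfold Pf
      rw [hxval]
      norm_num
    refine ⟨?_, ?_, hlast⟩
    · show Pf 2 x * (63/50) ≤ 11/5
      rw [hPf2]; norm_num
    · show (63/50) * (1 - r * Pf 2 x) ≥ 1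
      rw [hPf2, hrval]; norm_num
  · -- Δ ≥ 4
    have hr16 : r ≤ 1/16 := by
      rw [hr, inv_le_comm₀ hp (by norm_num)]
      calc ((1:ℝ)/16)⁻¹ = 2 ^ 4 := by norm_num
        _ ≤ 2 ^ Δ := by apply pow_le_pow_right₀ (by norm_num) h4
    have hPfd : Pf (Δ - 1) x ≤ 1251/800 := by
      have h1 : ((Δ - 1 : ℕ) : ℝ) * x ≤ 33/80 := by
        have := nat_fact2 Δ h4
        have hc : (16:ℝ) * ((Δ - 1 : ℕ):ℝ) ≤ 3 * 2 ^ Δ := by exact_mod_cast this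
        have hDr : ((Δ - 1 : ℕ):ℝ) * r ≤ 3/16 := by
          rw [le_div_iff₀ (by norm_num : (0:ℝ) < 16)]
          calc ((Δ - 1 : ℕ):ℝ) * r * 16 = (16 * ((Δ - 1:ℕ):ℝ)) * r := by ring
            _ ≤ (3 * 2 ^ Δ) * r := by
                apply mul_le_mul_of_nonneg_right hc (le_of_lt hrpos)
            _ = 3 * ((2:ℝ) ^ Δ * r) := by ring
            _ = 3 := by rw [hrid]; ring
        calc ((Δ - 1 : ℕ):ℝ) * x = (11/5) * (((Δ - 1:ℕ):ℝ) * r) := by rw [hx]; ring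
          _ ≤ (11/5) * (3/16) := by linarith
          _ = 33/80 := by norm_num
      have h2 : (((2 ^ (Δ-1) - 1 - (Δ-1) : ℕ) : ℝ)) * x ^ 2 ≤ 121/800 := by
        have hhalf : (2:ℝ) ^ (Δ - 1) * r = 1/2 := by
          have : (2:ℝ) ^ Δ = 2 * 2 ^ (Δ - 1) := by
            rw [← pow_succ']
            congr 1
            omega
          rw [this] at hrid
          linarith
        calc (((2 ^ (Δ-1) - 1 - (Δ-1) : ℕ) : ℝ)) * x ^ 2 ≤ 2 ^ (Δ-1) * x ^ 2 := by
              apply mul_le_mul_of_nonneg_right (hcast (Δ-1)) (sq_nonneg x)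
          _ = (121/25) * ((2:ℝ) ^ (Δ-1) * r) * r := by rw [hx]; ring
          _ = (121/50) * r := by rw [hhalf]; ring
          _ ≤ 121/800 := by nlinarith
      unfold Pf
      linarith
    have hPfd0 : 0 ≤ Pf (Δ - 1) x := Pf_nonneg hx0
    refine ⟨?_, ?_, hlast⟩
    · calc Pf (Δ - 1) x * (63/50) ≤ (1251/800) * (63/50) := by linarith
        _ ≤ 11/5 := by norm_num
    · have : r * Pf (Δ - 1) x ≤ (1/16) * (1251/800) := by
        apply mul_le_mul hr16 hPfd hPfd0 (by norm_num)
      nlinarith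

theorem master3 {Δ : ℕ} (hΔ : 3 ≤ Δ)
    (hdeg : ∀ x : V, (E.filter (fun e => x ∈ e)).card ≤ Δ)
    (hw : ‖w‖ ≤ ((2:ℝ) ^ Δ)⁻¹) :
    ∀ n (A B : Finset V), A.card ≤ n → Disjoint A B → (∀ e ∈ E, ¬ e ⊆ B) →
      Zp E w A B ≠ 0 ∧
      (∀ v ∈ A, (E.filter (fun e => v ∈ e ∧ e ⊆ A ∪ B)).card ≤ Δ - 1 →
        ‖Zp E w (A.erase v) B‖ ≤ (63/50) * ‖Zp E w A B‖ ∧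
        ‖Zp E w (A.erase v) (insert v B)‖ ≤ (11/5) * ‖Zp E w A B‖) := by
  classical
  obtain ⟨hrpos, hr8, ⟨hx0, hx1⟩, hnumA, hnumB, hnumC⟩ := numerics hΔ
  set r : ℝ := ((2:ℝ) ^ Δ)⁻¹ with hrdef
  set x : ℝ := (11/5) * r with hxdef
  have hw0 : 0 ≤ ‖w‖ := norm_nonneg w
  intro n
  induction n with
  | zero =>
    intro A B hcard hdis hK
    have hA : A = ∅ := Finset.card_eq_zero.1 (Nat.le_zero.1 hcard)
    subst hA
    refine ⟨by rw [Zp_empty hK]; exact one_ne_zero, ?_⟩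
    intro v hv
    exact absurd hv (Finset.notMem_empty v)
  | succ n ih =>
    intro A B hcard hdis hK
    rcases A.eq_empty_or_nonempty with rfl | hAne
    · refine ⟨by rw [Zp_empty hK]; exact one_ne_zero, ?_⟩
      intro v hv
      exact absurd hv (Finset.notMem_empty v)
    -- key upper bound for the contracted term
    have keyb : ∀ v ∈ A, ∀ m : ℕ, (E.filter (fun e => v ∈ e ∧ e ⊆ A ∪ B)).card ≤ m →
        ‖Zp E w (A.erase v) (insert v B)‖
          ≤ Pf m x * ‖Zp E w (A.erase v) B‖ := by
      intro v hv m hm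
      have hvB : v ∉ B := Finset.disjoint_left.1 hdis hv
      by_cases hc : ∃ e ∈ E, v ∈ e ∧ e ⊆ insert v B
      · obtain ⟨e, he, hve, hsub⟩ := hc
        rw [Zp_zero he hsub, norm_zero]
        exact mul_nonneg (Pf_nonneg hx0) (norm_nonneg _)
      · push_neg at hc
        rw [Zp_expand hv]
        set F := (E.filter (fun e => v ∈ e ∧ e ⊆ A ∪ B)).image (fun e => e \ insert v B)
          with hFdef
        have hFne : ∀ f ∈ F, f.Nonempty := by
          intro f hf
          rw [hFdef] at hf
          simp only [Finset.mem_image, Finset.mem_filter] at hf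
          obtain ⟨e, ⟨heE, hve, heAB⟩, rfl⟩ := hf
          rw [Finset.sdiff_nonempty]
          exact hc e heE hve
        have hFcard : F.card ≤ m := by
          calc F.card ≤ (E.filter (fun e => v ∈ e ∧ e ⊆ A ∪ B)).card :=
                Finset.card_image_le
            _ ≤ m := hm
        have hAerase : (A.erase v).card ≤ n := by
          have := Finset.card_erase_of_mem hv
          have hApos : 1 ≤ A.card := Finset.card_pos.2 hAne
          omega
        have hdis' : Disjoint (A.erase v) B :=
          Finset.disjoint_of_subset_left (Finset.erase_subset v A) hdis
        -- bound each term of the expansion via the chain lemma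
        have hterm : ∀ I ∈ F.powerset,
            ‖((-1 : ℂ) ^ I.card * (w ^ (I.biUnion id).card *
              Zp E w ((A.erase v) \ I.biUnion id) (B ∪ I.biUnion id)))‖
            ≤ x ^ (I.biUnion id).card * ‖Zp E w (A.erase v) B‖ := by
          intro I hI
          rw [Finset.mem_powerset] at hI
          have hUsub : I.biUnion id ⊆ A.erase v := by
            apply Finset.biUnion_subset.2
            intro f hf
            have hfF := hI hf
            rw [hFdef] at hfF
            simp only [Finset.mem_image, Finset.mem_filter] at hfF
            obtain ⟨e, ⟨heE, hve, heAB⟩, rfl⟩ := hfF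
            intro y hy
            simp only [Finset.mem_sdiff, Finset.mem_insert, id] at hy
            push_neg at hy
            obtain ⟨hye, hyv, hyB⟩ := hy
            rcases Finset.mem_union.1 (heAB hye) with h | h
            · exact Finset.mem_erase.2 ⟨hyv, h⟩
            · exact absurd h hyB
          have hUdeg : ∀ y ∈ I.biUnion id,
              (E.filter (fun e => y ∈ e ∧ e ⊆ (A.erase v) ∪ B)).card ≤ Δ - 1 := by
            intro y hy
            simp only [Finset.mem_biUnion, id] at hy
            obtain ⟨f, hfI, hyf⟩ := hy
            have hfF := hI hfI
            rw [hFdef] at hfF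
            simp only [Finset.mem_image, Finset.mem_filter] at hfF
            obtain ⟨e₀, ⟨he₀E, hve₀, he₀AB⟩, rfl⟩ := hfF
            rw [Finset.mem_sdiff] at hyf
            have hsubset : E.filter (fun e => y ∈ e ∧ e ⊆ (A.erase v) ∪ B)
                ⊆ E.filter (fun e => y ∈ e) :=
              Finset.monotone_filter_right _ (fun e _ h => h.1)
            have hssub : E.filter (fun e => y ∈ e ∧ e ⊆ (A.erase v) ∪ B)
                ⊂ E.filter (fun e => y ∈ e) := by
              rw [Finset.ssubset_iff_of_subset hsubset]
              refine ⟨e₀, Finset.mem_filter.2 ⟨he₀E, hyf.1⟩, ?_⟩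
              intro hmem
              rw [Finset.mem_filter] at hmem
              have := hmem.2.2 hve₀
              rcases Finset.mem_union.1 this with h | h
              · exact (Finset.notMem_erase v A) h
              · exact hvB h
            have := Finset.card_lt_card hssub
            have := hdeg y
            omega
          have hchain := Zp_chain (C := 11/5) (r := r) (by norm_num) hw
            (fun A' B' hc' hd' hK' v' hv' hdv' => ((ih A' B' hc' hd' hK').2 v' hv' hdv').2)
            (I.biUnion id) (A.erase v) B hAerase hdis' hUsub hUdeg
          rw [norm_mul, norm_mul, norm_pow, norm_pow]
          have habs1 : ‖(-1 : ℂ)‖ = 1 := by simp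
          rw [habs1, one_pow, one_mul]
          calc ‖w‖ ^ (I.biUnion id).card *
                ‖Zp E w ((A.erase v) \ I.biUnion id) (B ∪ I.biUnion id)‖
              ≤ ‖w‖ ^ (I.biUnion id).card *
                ((11/5) ^ (I.biUnion id).card * ‖Zp E w (A.erase v) B‖) := by
                apply mul_le_mul_of_nonneg_left hchain (pow_nonneg hw0 _)
            _ = (‖w‖ * (11/5)) ^ (I.biUnion id).card *
                  ‖Zp E w (A.erase v) B‖ := by
                rw [mul_pow]; ring
            _ ≤ x ^ (I.biUnion id).card * ‖Zp E w (A.erase v) B‖ := by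
                apply mul_le_mul_of_nonneg_right _ (norm_nonneg _)
                apply pow_le_pow_left₀ (by positivity)
                rw [hxdef]
                calc ‖w‖ * (11/5) ≤ r * (11/5) := by
                      apply mul_le_mul_of_nonneg_right hw (by norm_num)
                  _ = 11/5 * r := by ring
        calc ‖(∑ I ∈ F.powerset, (-1 : ℂ) ^ I.card * (w ^ (I.biUnion id).card *
              Zp E w ((A.erase v) \ I.biUnion id) (B ∪ I.biUnion id)))‖
            ≤ ∑ I ∈ F.powerset, ‖((-1 : ℂ) ^ I.card * (w ^ (I.biUnion id).card *
              Zp E w ((A.erase v) \ I.biUnion id) (B ∪ I.biUnion id)))‖ :=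
              norm_sum_le _ _
          _ ≤ ∑ I ∈ F.powerset, x ^ (I.biUnion id).card * ‖Zp E w (A.erase v) B‖ :=
              Finset.sum_le_sum hterm
          _ = (∑ I ∈ F.powerset, x ^ (I.biUnion id).card) * ‖Zp E w (A.erase v) B‖ := by
              rw [Finset.sum_mul]
          _ ≤ Pf F.card x * ‖Zp E w (A.erase v) B‖ := by
              apply mul_le_mul_of_nonneg_right _ (norm_nonneg _)
              exact sum_powerset_bound hFne hx0 hx1
          _ ≤ Pf m x * ‖Zp E w (A.erase v) B‖ := by
              apply mul_le_mul_of_nonneg_right (Pf_mono hx0 hFcard) (norm_nonneg _)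
    -- the lower bound for Zp A B in terms of Zp (A.erase v) B
    have lowb : ∀ v ∈ A, ∀ m : ℕ, (E.filter (fun e => v ∈ e ∧ e ⊆ A ∪ B)).card ≤ m →
        (1 - r * Pf m x) * ‖Zp E w (A.erase v) B‖ ≤ ‖Zp E w A B‖ := by
      intro v hv m hm
      have hk := keyb v hv m hm
      rw [Zp_rec hv]
      have h1 : ‖w * Zp E w (A.erase v) (insert v B)‖
          ≤ r * (Pf m x * ‖Zp E w (A.erase v) B‖) := by
        rw [norm_mul]
        apply mul_le_mul hw hk (norm_nonneg _) (le_of_lt hrpos)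
      have h2 := abs_add_lower (Zp E w (A.erase v) B) (w * Zp E w (A.erase v) (insert v B))
      linarith
    have hAerase' : ∀ v ∈ A, (A.erase v).card ≤ n := by
      intro v hv
      have := Finset.card_erase_of_mem hv
      have hApos : 1 ≤ A.card := Finset.card_pos.2 hAne
      omega
    have hdis'' : ∀ v, Disjoint (A.erase v) B :=
      fun v => Finset.disjoint_of_subset_left (Finset.erase_subset v A) hdis
    constructor
    · -- nonvanishing
      obtain ⟨v, hv⟩ := hAne
      have hdegv : (E.filter (fun e => v ∈ e ∧ e ⊆ A ∪ B)).card ≤ Δ := by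
        calc (E.filter (fun e => v ∈ e ∧ e ⊆ A ∪ B)).card
            ≤ (E.filter (fun e => v ∈ e)).card :=
              Finset.card_le_card (Finset.monotone_filter_right _ (fun e _ h => h.1))
          _ ≤ Δ := hdeg v
      have hlow := lowb v hv Δ hdegv
      have hprev := (ih (A.erase v) B (hAerase' v hv) (hdis'' v) hK).1
      have hprevpos : 0 < ‖Zp E w (A.erase v) B‖ :=
        norm_pos_iff.mpr hprev
      have hfac : 0 < 1 - r * Pf Δ x := by linarith
      intro hzero
      rw [hzero, norm_zero] at hlow
      nlinarith
    · intro v hv hdv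
      have hlow := lowb v hv (Δ - 1) hdv
      have hkey := keyb v hv (Δ - 1) hdv
      have habs0 : 0 ≤ ‖Zp E w (A.erase v) B‖ := norm_nonneg _
      have h2 : ‖Zp E w (A.erase v) B‖ ≤ (63/50) * ‖Zp E w A B‖ := by
        calc ‖Zp E w (A.erase v) B‖
            = 1 * ‖Zp E w (A.erase v) B‖ := by ring
          _ ≤ ((63/50) * (1 - r * Pf (Δ - 1) x)) * ‖Zp E w (A.erase v) B‖ := by
              apply mul_le_mul_of_nonneg_right hnumB habs0
          _ = (63/50) * ((1 - r * Pf (Δ - 1) x) * ‖Zp E w (A.erase v) B‖) := by ring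
          _ ≤ (63/50) * ‖Zp E w A B‖ := by
              apply mul_le_mul_of_nonneg_left hlow (by norm_num)
      refine ⟨h2, ?_⟩
      calc ‖Zp E w (A.erase v) (insert v B)‖
          ≤ Pf (Δ - 1) x * ‖Zp E w (A.erase v) B‖ := hkey
        _ ≤ Pf (Δ - 1) x * ((63/50) * ‖Zp E w A B‖) := by
            apply mul_le_mul_of_nonneg_left h2 (Pf_nonneg hx0)
        _ = (Pf (Δ - 1) x * (63/50)) * ‖Zp E w A B‖ := by ring
        _ ≤ (11/5) * ‖Zp E w A B‖ := by
            apply mul_le_mul_of_nonneg_right hnumA (norm_nonneg _)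

lemma Zp_star {A : Finset V} {v : V} (hv : v ∈ A)
    (hpair : ∀ e ∈ E, v ∈ e → e ⊆ A → ∃ x, x ≠ v ∧ e = {v, x}) :
    Zp E w (A.erase v) (insert v ∅) =
      Zp E w ((A.erase v) \ ((E.filter (fun e => v ∈ e ∧ e ⊆ A)).biUnion
        (fun e => e.erase v))) ∅ := by
  classical
  set S := (E.filter (fun e => v ∈ e ∧ e ⊆ A)).biUnion (fun e => e.erase v) with hS
  have hsetEq : (A.erase v).powerset.filter (fun T => ∀ e ∈ E, ¬ e ⊆ (insert v ∅) ∪ T)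
      = ((A.erase v) \ S).powerset.filter (fun T => ∀ e ∈ E, ¬ e ⊆ ∅ ∪ T) := by
    ext T
    simp only [Finset.mem_filter, Finset.mem_powerset, Finset.empty_union]
    constructor
    · rintro ⟨hTA, hQ⟩
      refine ⟨?_, ?_⟩
      · intro y hy
        rw [Finset.mem_sdiff]
        refine ⟨hTA hy, ?_⟩
        intro hyS
        rw [hS] at hyS
        simp only [Finset.mem_biUnion, Finset.mem_filter] at hyS
        obtain ⟨e, ⟨heE, hve, heA⟩, hye⟩ := hyS
        obtain ⟨x, hxv, rfl⟩ := hpair e heE hve heA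
        have hyx : y = x := by
          rcases Finset.mem_erase.1 hye with ⟨hyv, hymem⟩
          rcases Finset.mem_insert.1 hymem with h | h
          · exact absurd h hyv
          · exact Finset.mem_singleton.1 h
        subst hyx
        refine hQ _ heE ?_
        intro z hz
        rcases Finset.mem_insert.1 hz with h' | hz'
        · exact Finset.mem_union_left _ (by rw [h']; exact Finset.mem_insert_self v ∅)
        · rw [Finset.mem_singleton] at hz'
          rw [hz']
          exact Finset.mem_union_right _ hy
      · intro e heE hsub
        refine hQ e heE (hsub.trans ?_)
        exact Finset.subset_union_right
    · rintro ⟨hTA, hbase⟩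
      have hTA' : T ⊆ A.erase v := hTA.trans (Finset.sdiff_subset)
      refine ⟨hTA', ?_⟩
      intro e heE hsub
      by_cases hve : v ∈ e
      · have heA : e ⊆ A := by
          intro z hz
          rcases Finset.mem_union.1 (hsub hz) with h | h
          · rcases Finset.mem_insert.1 h with rfl | h'
            · exact hv
            · exact absurd h' (Finset.notMem_empty z)
          · exact Finset.erase_subset v A (hTA' h)
        obtain ⟨x, hxv, rfl⟩ := hpair e heE hve heA
        have hxT : x ∈ T := by
          have hxmem : x ∈ ({v, x} : Finset V) := by simp
          rcases Finset.mem_union.1 (hsub hxmem) with h | h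
          · rcases Finset.mem_insert.1 h with h' | h'
            · exact absurd h' hxv
            · exact absurd h' (Finset.notMem_empty x)
          · exact h
        have hxS : x ∈ S := by
          rw [hS]
          simp only [Finset.mem_biUnion, Finset.mem_filter]
          exact ⟨{v, x}, ⟨heE, Finset.mem_insert_self v _, heA⟩,
            Finset.mem_erase.2 ⟨hxv, by simp⟩⟩
        have := hTA hxT
        rw [Finset.mem_sdiff] at this
        exact this.2 hxS
      · refine hbase e heE ?_
        intro z hz
        rcases Finset.mem_union.1 (hsub hz) with h | h
        · rcases Finset.mem_insert.1 h with rfl | h'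
          · exact absurd hz hve
          · exact absurd h' (Finset.notMem_empty z)
        · exact h
  rw [Zp, Zp, hsetEq]

/-- The potential function for the `Δ = 2` induction. -/
noncomputable def kap (a : ℕ) : ℝ := 2 * (a + 1) / (a + 2)

lemma kap_pos (a : ℕ) : 0 < kap a := by
  unfold kap
  positivity

lemma kap_ge_one (a : ℕ) : 1 ≤ kap a := by
  unfold kap
  rw [le_div_iff₀ (by positivity)]
  have : (0:ℝ) ≤ a := Nat.cast_nonneg a
  linarith

lemma kap_ge_43 {a : ℕ} (ha : 1 ≤ a) : 4/3 ≤ kap a := by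
  unfold kap
  rw [le_div_iff₀ (by positivity)]
  have : (1:ℝ) ≤ a := by exact_mod_cast ha
  linarith

lemma kap_rec (b : ℕ) : (1 - kap b / 4) * kap (b + 1) = 1 := by
  unfold kap
  have h1 : ((b:ℝ) + 2) > 0 := by positivity
  have h2 : ((b:ℝ) + 1 + 2) > 0 := by positivity
  field_simp
  push_cast
  ring

lemma kap_prod_lt (c : ℕ) : kap (c + 1) * kap c / 4 < 1 := by
  unfold kap
  have h1 : ((c:ℝ) + 2) > 0 := by positivity
  have h2 : ((c:ℝ) + 1 + 2) > 0 := by positivity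
  rw [div_lt_one (by norm_num)]
  rw [div_mul_div_comm]
  rw [div_lt_iff₀ (by positivity)]
  push_cast
  nlinarith [sq_nonneg ((c:ℝ))]

lemma deg_after_erase {x v : V} {e₀ A'' : Finset V}
    (hdegx : (E.filter (fun e => x ∈ e)).card ≤ 2)
    (he₀ : e₀ ∈ E) (hve : v ∈ e₀) (hxe : x ∈ e₀) (hvA : v ∉ A'') :
    (E.filter (fun e => x ∈ e ∧ e ⊆ A'')).card ≤ 1 := by
  have hsubset : E.filter (fun e => x ∈ e ∧ e ⊆ A'') ⊆ E.filter (fun e => x ∈ e) :=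
    Finset.monotone_filter_right _ (fun e _ h => h.1)
  have hssub : E.filter (fun e => x ∈ e ∧ e ⊆ A'') ⊂ E.filter (fun e => x ∈ e) := by
    rw [Finset.ssubset_iff_of_subset hsubset]
    refine ⟨e₀, Finset.mem_filter.2 ⟨he₀, hxe⟩, ?_⟩
    intro hmem
    exact hvA ((Finset.mem_filter.1 hmem).2.2 hve)
  have := Finset.card_lt_card hssub
  omega

theorem master2 (hsize : ∀ e ∈ E, e.card ≤ 2)
    (hdeg : ∀ x : V, (E.filter (fun e => x ∈ e)).card ≤ 2)
    (hK : ∀ e ∈ E, ¬ e ⊆ (∅ : Finset V))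
    (hw : ‖w‖ ≤ 1/4) :
    ∀ n (A : Finset V), A.card ≤ n →
      Zp E w A ∅ ≠ 0 ∧
      (∀ v ∈ A, (E.filter (fun e => v ∈ e ∧ e ⊆ A)).card ≤ 1 →
        ‖Zp E w (A.erase v) ∅‖ ≤ kap A.card * ‖Zp E w A ∅‖) := by
  classical
  have hw0 : 0 ≤ ‖w‖ := norm_nonneg w
  have habs1w : (3/4:ℝ) ≤ ‖1 + w‖ := by
    have h := abs_add_lower 1 w
    rw [norm_one] at h
    linarith
  intro n
  induction n with
  | zero =>
    intro A hcard
    have hA : A = ∅ := Finset.card_eq_zero.1 (Nat.le_zero.1 hcard)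
    subst hA
    exact ⟨by rw [Zp_empty hK]; exact one_ne_zero,
      fun v hv => absurd hv (Finset.notMem_empty v)⟩
  | succ n ih =>
    intro A hcard
    rcases A.eq_empty_or_nonempty with rfl | hAne
    · exact ⟨by rw [Zp_empty hK]; exact one_ne_zero,
        fun v hv => absurd hv (Finset.notMem_empty v)⟩
    have hstep : ∀ v ∈ A, ¬ (∃ e ∈ E, v ∈ e ∧ e ⊆ insert v ∅) →
        Zp E w A ∅ = Zp E w (A.erase v) ∅ +
          w * Zp E w ((A.erase v) \ ((E.filter (fun e => v ∈ e ∧ e ⊆ A)).biUnion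
            (fun e => e.erase v))) ∅ := by
      intro v hv hsing
      push_neg at hsing
      have hpair : ∀ e ∈ E, v ∈ e → e ⊆ A → ∃ x, x ≠ v ∧ e = {v, x} := by
        intro e he hve heA
        have hne : ¬ e ⊆ insert v ∅ := hsing e he hve
        rw [Finset.not_subset] at hne
        obtain ⟨x, hxe, hxv⟩ := hne
        simp only [Finset.mem_insert, Finset.notMem_empty, or_false] at hxv
        refine ⟨x, hxv, ?_⟩
        have hsub : ({v, x} : Finset V) ⊆ e := by
          intro z hz
          rcases Finset.mem_insert.1 hz with rfl | hz'
          · exact hve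
          · rw [Finset.mem_singleton] at hz'
            rw [hz']
            exact hxe
        have hcard2 : ({v, x} : Finset V).card = 2 := by
          rw [Finset.card_insert_of_notMem (by simp [Ne.symm hxv]), Finset.card_singleton]
        exact (Finset.eq_of_subset_of_card_le hsub (by rw [hcard2]; exact hsize e he)).symm
      rw [Zp_rec hv, Zp_star hv hpair]
    -- facts about S
    have hSfacts : ∀ v ∈ A,
        ((E.filter (fun e => v ∈ e ∧ e ⊆ A)).biUnion (fun e => e.erase v)) ⊆ A.erase v ∧
        (∀ x ∈ (E.filter (fun e => v ∈ e ∧ e ⊆ A)).biUnion (fun e => e.erase v),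
          ∃ e ∈ E, v ∈ e ∧ x ∈ e ∧ e ⊆ A) ∧
        ((E.filter (fun e => v ∈ e ∧ e ⊆ A)).biUnion (fun e => e.erase v)).card
          ≤ (E.filter (fun e => v ∈ e ∧ e ⊆ A)).card := by
      intro v hv
      refine ⟨?_, ?_, ?_⟩
      · intro x hx
        simp only [Finset.mem_biUnion, Finset.mem_filter] at hx
        obtain ⟨e, ⟨heE, hve, heA⟩, hxe⟩ := hx
        rw [Finset.mem_erase] at hxe ⊢
        exact ⟨hxe.1, heA hxe.2⟩
      · intro x hx
        simp only [Finset.mem_biUnion, Finset.mem_filter] at hx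
        obtain ⟨e, ⟨heE, hve, heA⟩, hxe⟩ := hx
        exact ⟨e, heE, hve, Finset.erase_subset v e hxe, heA⟩
      · calc ((E.filter (fun e => v ∈ e ∧ e ⊆ A)).biUnion (fun e => e.erase v)).card
            ≤ ∑ e ∈ E.filter (fun e => v ∈ e ∧ e ⊆ A), (e.erase v).card :=
              Finset.card_biUnion_le
          _ ≤ (E.filter (fun e => v ∈ e ∧ e ⊆ A)).card • 1 := by
              apply Finset.sum_le_card_nsmul
              intro e he
              rw [Finset.mem_filter] at he
              have := Finset.card_erase_of_mem he.2.1
              have := hsize e he.1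
              omega
          _ = (E.filter (fun e => v ∈ e ∧ e ⊆ A)).card := by simp
    -- claim (2) for all suitable v
    have claim2 : ∀ v ∈ A, (E.filter (fun e => v ∈ e ∧ e ⊆ A)).card ≤ 1 →
        ‖Zp E w (A.erase v) ∅‖ ≤ kap A.card * ‖Zp E w A ∅‖ := by
      intro v hv hdv
      have hb := Finset.card_erase_add_one hv
      set b := (A.erase v).card with hbdef
      have hAcard : A.card = b + 1 := hb.symm
      rw [hAcard]
      by_cases hsing : ∃ e ∈ E, v ∈ e ∧ e ⊆ insert v ∅
      · obtain ⟨e, he, hve, hsub⟩ := hsing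
        have hzero : Zp E w (A.erase v) (insert v ∅) = 0 := Zp_zero he hsub
        have heq : Zp E w A ∅ = Zp E w (A.erase v) ∅ := by
          rw [Zp_rec hv, hzero, mul_zero, add_zero]
        rw [heq]
        have h1 : 1 ≤ kap (b + 1) := kap_ge_one _
        nlinarith [norm_nonneg (Zp E w (A.erase v) ∅)]
      · have heq := hstep v hv hsing
        obtain ⟨hSsub, hSmem, hScard⟩ := hSfacts v hv
        set S := (E.filter (fun e => v ∈ e ∧ e ⊆ A)).biUnion (fun e => e.erase v) with hSdef
        have hScard1 : S.card ≤ 1 := le_trans hScard hdv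
        rcases Nat.le_one_iff_eq_zero_or_eq_one.1 hScard1 with h0 | h1
        · -- S = ∅
          have hSempty : S = ∅ := Finset.card_eq_zero.1 h0
          rw [hSempty, Finset.sdiff_empty] at heq
          have heq2 : Zp E w A ∅ = (1 + w) * Zp E w (A.erase v) ∅ := by rw [heq]; ring
          have : ‖Zp E w A ∅‖
              = ‖1 + w‖ * ‖Zp E w (A.erase v) ∅‖ := by
            rw [heq2, norm_mul]
          have h43 : (4/3:ℝ) ≤ kap (b + 1) := kap_ge_43 (by omega)
          nlinarith [norm_nonneg (Zp E w (A.erase v) ∅),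
            norm_nonneg (Zp E w A ∅)]
        · -- S = {x}
          obtain ⟨x, hSx⟩ := Finset.card_eq_one.1 h1
          have hxS : x ∈ S := by rw [hSx]; exact Finset.mem_singleton_self x
          obtain ⟨e₀, he₀E, hve₀, hxe₀, he₀A⟩ := hSmem x hxS
          have hxAv : x ∈ A.erase v := hSsub hxS
          have hdx : (E.filter (fun e => x ∈ e ∧ e ⊆ A.erase v)).card ≤ 1 :=
            deg_after_erase (hdeg x) he₀E hve₀ hxe₀ (Finset.notMem_erase v A)
          have hcard' : (A.erase v).card ≤ n := by omega
          have hih := (ih (A.erase v) hcard').2 x hxAv hdx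
          rw [hSx] at heq
          rw [← Finset.erase_eq] at heq
          -- lower bound
          have hlow : (1 - kap b / 4) * ‖Zp E w (A.erase v) ∅‖
              ≤ ‖Zp E w A ∅‖ := by
            rw [heq]
            have h1 : ‖w * Zp E w ((A.erase v).erase x) ∅‖
                ≤ (1/4) * (kap b * ‖Zp E w (A.erase v) ∅‖) := by
              rw [norm_mul]
              apply mul_le_mul hw hih (norm_nonneg _) (by norm_num)
            have h2 := abs_add_lower (Zp E w (A.erase v) ∅)
              (w * Zp E w ((A.erase v).erase x) ∅)
            linarith
          have hrec := kap_rec b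
          have hkpos := kap_pos (b + 1)
          nlinarith [norm_nonneg (Zp E w (A.erase v) ∅)]
    refine ⟨?_, claim2⟩
    -- nonvanishing
    obtain ⟨v, hv⟩ := hAne
    have hb := Finset.card_erase_add_one hv
    set b := (A.erase v).card with hbdef
    have hcard' : (A.erase v).card ≤ n := by omega
    have hprev := (ih (A.erase v) hcard').1
    have hprevpos : 0 < ‖Zp E w (A.erase v) ∅‖ := norm_pos_iff.mpr hprev
    by_cases hsing : ∃ e ∈ E, v ∈ e ∧ e ⊆ insert v ∅
    · obtain ⟨e, he, hve, hsub⟩ := hsing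
      have hzero : Zp E w (A.erase v) (insert v ∅) = 0 := Zp_zero he hsub
      rw [Zp_rec hv, hzero, mul_zero, add_zero]
      exact hprev
    · have heq := hstep v hv hsing
      obtain ⟨hSsub, hSmem, hScard⟩ := hSfacts v hv
      set S := (E.filter (fun e => v ∈ e ∧ e ⊆ A)).biUnion (fun e => e.erase v) with hSdef
      have hFv2 : (E.filter (fun e => v ∈ e ∧ e ⊆ A)).card ≤ 2 := by
        calc (E.filter (fun e => v ∈ e ∧ e ⊆ A)).card
            ≤ (E.filter (fun e => v ∈ e)).card :=
              Finset.card_le_card (Finset.monotone_filter_right _ (fun e _ h => h.1))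
          _ ≤ 2 := hdeg v
      have hScard2 : S.card ≤ 2 := le_trans hScard hFv2
      intro hzero0
      interval_cases hS : S.card
      · -- S empty
        have hSempty : S = ∅ := Finset.card_eq_zero.1 hS
        rw [hSempty, Finset.sdiff_empty] at heq
        have heq2 : Zp E w A ∅ = (1 + w) * Zp E w (A.erase v) ∅ := by rw [heq]; ring
        have h1w : (1 + w) ≠ 0 := by
          intro h
          rw [h, norm_zero] at habs1w
          linarith
        exact (mul_ne_zero h1w hprev) (heq2 ▸ hzero0)
      · -- S singleton
        obtain ⟨x, hSx⟩ := Finset.card_eq_one.1 hS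
        have hxS : x ∈ S := by rw [hSx]; exact Finset.mem_singleton_self x
        obtain ⟨e₀, he₀E, hve₀, hxe₀, he₀A⟩ := hSmem x hxS
        have hxAv : x ∈ A.erase v := hSsub hxS
        have hdx : (E.filter (fun e => x ∈ e ∧ e ⊆ A.erase v)).card ≤ 1 :=
          deg_after_erase (hdeg x) he₀E hve₀ hxe₀ (Finset.notMem_erase v A)
        have hih := (ih (A.erase v) hcard').2 x hxAv hdx
        rw [hSx, ← Finset.erase_eq] at heq
        have h1 : ‖w * Zp E w ((A.erase v).erase x) ∅‖
            ≤ (1/4) * (kap b * ‖Zp E w (A.erase v) ∅‖) := by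
          rw [norm_mul]
          apply mul_le_mul hw hih (norm_nonneg _) (by norm_num)
        have h2 := abs_add_lower (Zp E w (A.erase v) ∅)
          (w * Zp E w ((A.erase v).erase x) ∅)
        rw [← heq, hzero0, norm_zero] at h2
        have hrec := kap_rec b
        have hkpos := kap_pos (b + 1)
        nlinarith
      · -- S pair
        obtain ⟨x, y, hxy, hSxy⟩ := Finset.card_eq_two.1 hS
        have hxS : x ∈ S := by rw [hSxy]; simp
        have hyS : y ∈ S := by rw [hSxy]; simp
        obtain ⟨e₀, he₀E, hve₀, hxe₀, he₀A⟩ := hSmem x hxS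
        obtain ⟨e₁, he₁E, hve₁, hye₁, he₁A⟩ := hSmem y hyS
        have hxAv : x ∈ A.erase v := hSsub hxS
        have hyAv : y ∈ A.erase v := hSsub hyS
        have hsd : (A.erase v) \ S = ((A.erase v).erase x).erase y := by
          rw [hSxy]
          ext z
          simp only [Finset.mem_sdiff, Finset.mem_erase, Finset.mem_insert,
            Finset.mem_singleton]
          tauto
        rw [hsd] at heq
        have hdx : (E.filter (fun e => x ∈ e ∧ e ⊆ A.erase v)).card ≤ 1 :=
          deg_after_erase (hdeg x) he₀E hve₀ hxe₀ (Finset.notMem_erase v A)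
        have hih1 := (ih (A.erase v) hcard').2 x hxAv hdx
        have hyAvx : y ∈ (A.erase v).erase x := Finset.mem_erase.2 ⟨hxy.symm, hyAv⟩
        have hvnot : v ∉ (A.erase v).erase x :=
          fun h => Finset.notMem_erase v A (Finset.erase_subset x _ h)
        have hdy : (E.filter (fun e => y ∈ e ∧ e ⊆ (A.erase v).erase x)).card ≤ 1 :=
          deg_after_erase (hdeg y) he₁E hve₁ hye₁ hvnot
        have hcard'' : ((A.erase v).erase x).card ≤ n := by
          have := Finset.card_erase_of_mem hxAv
          omega
        have hih2 := (ih ((A.erase v).erase x) hcard'').2 y hyAvx hdy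
        have hcx := Finset.card_erase_add_one hxAv
        set c := ((A.erase v).erase x).card with hcdef
        have hbc : b = c + 1 := hcx.symm
        -- combine
        have hchain : ‖Zp E w (((A.erase v).erase x).erase y) ∅‖
            ≤ kap (c + 1) * (kap c * ‖Zp E w (A.erase v) ∅‖) := by
          calc ‖Zp E w (((A.erase v).erase x).erase y) ∅‖
              ≤ kap c * ‖Zp E w ((A.erase v).erase x) ∅‖ := hih2
            _ ≤ kap c * (kap b * ‖Zp E w (A.erase v) ∅‖) := by
                apply mul_le_mul_of_nonneg_left hih1 (le_of_lt (kap_pos c))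
            _ = kap (c + 1) * (kap c * ‖Zp E w (A.erase v) ∅‖) := by
                rw [hbc]; ring
        have h1 : ‖w * Zp E w (((A.erase v).erase x).erase y) ∅‖
            ≤ (1/4) * (kap (c+1) * (kap c * ‖Zp E w (A.erase v) ∅‖)) := by
          rw [norm_mul]
          apply mul_le_mul hw hchain (norm_nonneg _) (by norm_num)
        have h2 := abs_add_lower (Zp E w (A.erase v) ∅)
          (w * Zp E w (((A.erase v).erase x).erase y) ∅)
        rw [← heq, hzero0, norm_zero] at h2
        have hprod := kap_prod_lt c
        nlinarith [kap_pos c, kap_pos (c+1)]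

section Reduction

variable (G : SimpleGraph V) [DecidableRel G.Adj]

noncomputable def tdPoly (z : ℂ) : ℂ :=
  ∑ S ∈ (univ : Finset (Finset V)).filter
      (fun S => ∀ u : V, ∃ v ∈ S, G.Adj u v), z ^ S.card

lemma tdp_eq {z : ℂ} (hz : z ≠ 0) :
    tdPoly G z = z ^ (univ : Finset V).card *
      Zp ((univ : Finset V).image (fun u => G.neighborFinset u)) z⁻¹ (univ : Finset V) ∅ := by
  classical
  rw [tdPoly, Zp, Finset.powerset_univ, Finset.mul_sum]
  refine Finset.sum_nbij' (fun S => Sᶜ) (fun T => Tᶜ) ?_ ?_ ?_ ?_ ?_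
  · intro S hS
    rw [Finset.mem_filter] at hS ⊢
    refine ⟨Finset.mem_univ _, ?_⟩
    intro e he
    rw [Finset.mem_image] at he
    obtain ⟨u, _, rfl⟩ := he
    obtain ⟨v, hvS, hadj⟩ := hS.2 u
    intro hsub
    have : v ∈ ∅ ∪ Sᶜ := hsub ((SimpleGraph.mem_neighborFinset G u v).2 hadj)
    rw [Finset.empty_union, Finset.mem_compl] at this
    exact this hvS
  · intro T hT
    rw [Finset.mem_filter] at hT ⊢
    refine ⟨Finset.mem_univ _, ?_⟩
    intro u
    have he : G.neighborFinset u ∈ (univ : Finset V).image (fun u => G.neighborFinset u) :=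
      Finset.mem_image_of_mem _ (Finset.mem_univ u)
    have := hT.2 _ he
    rw [Finset.empty_union, Finset.not_subset] at this
    obtain ⟨v, hvN, hvT⟩ := this
    exact ⟨v, show v ∈ Tᶜ from Finset.mem_compl.2 hvT,
      (SimpleGraph.mem_neighborFinset G u v).1 hvN⟩
  · intro S _
    exact compl_compl S
  · intro T _
    exact compl_compl T
  · intro S _
    have hcle : S.card ≤ (univ : Finset V).card := Finset.card_le_univ S
    rw [Finset.card_compl, inv_pow, Finset.card_univ]
    rw [eq_comm, mul_inv_eq_iff_eq_mul₀ (pow_ne_zero _ hz), ← pow_add]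
    congr 1
    rw [Finset.card_univ] at hcle
    omega

lemma td_filter_eq_of_deg_le_one (hiso : ∀ v : V, ∃ u : V, G.Adj v u)
    (hΔ : G.maxDegree ≤ 1) :
    (univ : Finset (Finset V)).filter (fun S => ∀ u : V, ∃ v ∈ S, G.Adj u v)
      = {(univ : Finset V)} := by
  classical
  ext S
  rw [Finset.mem_filter, Finset.mem_singleton]
  constructor
  · rintro ⟨-, htd⟩
    apply Finset.eq_univ_of_forall
    intro v
    obtain ⟨u, hadj⟩ := hiso v
    obtain ⟨y, hyS, hadj'⟩ := htd u
    have hcard : (G.neighborFinset u).card ≤ 1 :=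
      le_trans (G.degree_le_maxDegree u) hΔ
    have hv : v ∈ G.neighborFinset u := (SimpleGraph.mem_neighborFinset G u v).2 hadj.symm
    have hy : y ∈ G.neighborFinset u := (SimpleGraph.mem_neighborFinset G u y).2 hadj'
    have : v = y := Finset.card_le_one.1 hcard v hv y hy
    rwa [this]
  · rintro rfl
    refine ⟨Finset.mem_univ _, ?_⟩
    intro u
    obtain ⟨t, hadj⟩ := hiso u
    exact ⟨t, Finset.mem_univ t, hadj⟩

lemma E_nonempty (hiso : ∀ v : V, ∃ u : V, G.Adj v u) :
    ∀ e ∈ (univ : Finset V).image (fun u => G.neighborFinset u), ¬ e ⊆ (∅ : Finset V) := by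
  intro e he hsub
  rw [Finset.mem_image] at he
  obtain ⟨u, _, rfl⟩ := he
  obtain ⟨t, hadj⟩ := hiso u
  exact Finset.notMem_empty t (hsub ((SimpleGraph.mem_neighborFinset G u t).2 hadj))

lemma E_deg :
    ∀ x : V, (((univ : Finset V).image (fun u => G.neighborFinset u)).filter
      (fun e => x ∈ e)).card ≤ G.maxDegree := by
  classical
  intro x
  have hsub : ((univ : Finset V).image (fun u => G.neighborFinset u)).filter (fun e => x ∈ e)
      ⊆ (G.neighborFinset x).image (fun u => G.neighborFinset u) := by
    intro e he
    rw [Finset.mem_filter, Finset.mem_image] at he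
    obtain ⟨⟨u, _, rfl⟩, hx⟩ := he
    apply Finset.mem_image_of_mem
    rw [SimpleGraph.mem_neighborFinset] at hx ⊢
    exact hx.symm
  calc (((univ : Finset V).image (fun u => G.neighborFinset u)).filter
        (fun e => x ∈ e)).card
      ≤ ((G.neighborFinset x).image (fun u => G.neighborFinset u)).card :=
        Finset.card_le_card hsub
    _ ≤ (G.neighborFinset x).card := Finset.card_image_le
    _ = G.degree x := rfl
    _ ≤ G.maxDegree := G.degree_le_maxDegree x

lemma E_size :
    ∀ e ∈ (univ : Finset V).image (fun u => G.neighborFinset u), e.card ≤ G.maxDegree := by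
  intro e he
  rw [Finset.mem_image] at he
  obtain ⟨u, _, rfl⟩ := he
  exact G.degree_le_maxDegree u

end Reduction

theorem tdPoly_roots_aux
    (G : SimpleGraph V) [DecidableRel G.Adj]
    (hiso : ∀ v : V, ∃ u : V, G.Adj v u)
    (z : ℂ) (hz : tdPoly G z = 0) :
    ‖z‖ < (2 : ℝ) ^ G.maxDegree := by
  classical
  by_cases hzz : z = 0
  · subst hzz
    rw [norm_zero]
    positivity
  by_contra hlt
  push_neg at hlt
  cases isEmpty_or_nonempty V with
  | inl hempty =>
    have h1 : tdPoly G z = 1 := by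
      rw [tdPoly, Finset.filter_true_of_mem (fun S _ => fun u => (IsEmpty.false u).elim)]
      have hS : ∀ S : Finset V, S = ∅ :=
        fun S => Finset.eq_empty_of_forall_notMem (fun x _ => (IsEmpty.false x).elim)
      have hone : ∀ S ∈ (univ : Finset (Finset V)), z ^ S.card = 1 :=
        fun S _ => by rw [hS S, Finset.card_empty, pow_zero]
      rw [Finset.sum_congr rfl hone, Finset.sum_const, nsmul_eq_mul, mul_one]
      have : Fintype.card (Finset V) = 1 := by
        rw [Fintype.card_finset, Fintype.card_eq_zero, pow_zero]
      rw [Finset.card_univ, this, Nat.cast_one]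
    rw [hz] at h1
    exact zero_ne_one h1
  | inr hne =>
    have hΔ1 : 1 ≤ G.maxDegree := by
      obtain ⟨v⟩ := hne
      obtain ⟨u, hadj⟩ := hiso v
      have h0 : 0 < G.degree v := by
        rw [← SimpleGraph.card_neighborFinset_eq_degree]
        exact Finset.card_pos.2 ⟨u, (SimpleGraph.mem_neighborFinset G v u).2 hadj⟩
      exact le_trans h0 (G.degree_le_maxDegree v)
    have hzpow : (0:ℝ) < 2 ^ G.maxDegree := by positivity
    have hwb : ‖z⁻¹‖ ≤ ((2:ℝ) ^ G.maxDegree)⁻¹ := by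
      rw [norm_inv]
      exact inv_anti₀ hzpow hlt
    have hEne := E_nonempty G hiso
    have hEdeg := E_deg G
    have hEsize := E_size G
    have hzn : z ^ (univ : Finset V).card ≠ 0 := pow_ne_zero _ hzz
    have hZ0 : Zp ((univ : Finset V).image (fun u => G.neighborFinset u)) z⁻¹
        (univ : Finset V) ∅ = 0 := by
      have h := tdp_eq G hzz
      rw [hz] at h
      exact (mul_eq_zero.1 h.symm).resolve_left hzn
    rcases (by omega : G.maxDegree = 1 ∨ G.maxDegree = 2 ∨ 3 ≤ G.maxDegree) with h1 | h2 | h3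
    · have hfe := td_filter_eq_of_deg_le_one G hiso (by omega)
      have : tdPoly G z = z ^ (univ : Finset V).card := by
        rw [tdPoly, hfe, Finset.sum_singleton]
      exact hzn (by rw [← this]; exact hz)
    · have hw4 : ‖z⁻¹‖ ≤ 1/4 := by
        rw [norm_inv]
        rw [h2] at hlt
        rw [show ((2:ℝ) ^ (2:ℕ)) = 4 by norm_num] at hlt
        calc (‖z‖)⁻¹ ≤ (4:ℝ)⁻¹ := inv_anti₀ (by norm_num) hlt
          _ = 1/4 := by norm_num
      have hm := master2 (E := (univ : Finset V).image (fun u => G.neighborFinset u))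
        (w := z⁻¹) (fun e he => h2 ▸ hEsize e he) (fun x => h2 ▸ hEdeg x) hEne hw4
        (univ : Finset V).card univ le_rfl
      exact hm.1 hZ0
    · have hm := master3 (E := (univ : Finset V).image (fun u => G.neighborFinset u))
        (w := z⁻¹) h3 hEdeg hwb (univ : Finset V).card univ ∅ le_rfl
        (Finset.disjoint_empty_right _) hEne
      exact hm.1 hZ0

/-- If `G` has no isolated vertices and maximum degree `Δ`, then every complex root `z` of the
total domination polynomial satisfies `|z| < 2^Δ`. -/
theorem totalDominationPoly_roots_abs_lt
    {V : Type} [Fintype V] [DecidableEq V] (G : SimpleGraph V) [DecidableRel G.Adj]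
    (hiso : ∀ v : V, ∃ u : V, G.Adj v u)
    (z : ℂ) (hz : totalDominationPoly G z = 0) :
    ‖z‖ < (2 : ℝ) ^ G.maxDegree := by
  have hz' : tdPoly G z = 0 := hz
  exact tdPoly_roots_aux G hiso z hz'
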